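/- The eventual common-knowledge set is independent of the agent used to compute it: under the setup of the recursive knowledge sets, for all agents a, a' ∈ G and all m ≥ 2, I^a_m = I^{a'}_m. -/
import Mathlib


/-- The recursive knowledge sets: `knowSet G M 0 a = M a` and
`knowSet G M (m+1) a = ⋂_{b ∈ G} { e ∈ knowSet G M m b | b ∈ M a }`. -/
def knowSet {E : Type*} (G : Set E) (M : E → Set E) : ℕ → E → Set E
  | 0, a => M a
  | m + 1, a => ⋂ b ∈ G, {e ∈ knowSet G M m b | b ∈ M a}

lemma knowSet_empty {E : Type*} (G : Set E) (M : E → Set E) {a b : E}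
    (hb : b ∈ G) (hnb : b ∉ M a) (m : ℕ) : knowSet G M (m + 1) a = ∅ := by
  ext e
  simp only [knowSet, Set.mem_iInter, Set.mem_setOf_eq, Set.mem_empty_iff_false, iff_false]
  intro h
  exact hnb (h b hb).2

lemma knowSet_full {E : Type*} (G : Set E) (M : E → Set E) {a : E}
    (ha : G ⊆ M a) (m : ℕ) : knowSet G M (m + 1) a = ⋂ b ∈ G, knowSet G M m b := by
  ext e
  simp only [knowSet, Set.mem_iInter, Set.mem_setOf_eq]
  exact ⟨fun h b hb => (h b hb).1, fun h b hb => ⟨h b hb, ha hb⟩⟩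

theorem stmt3 {E : Type*} [Fintype E] (G : Set E) (M : E → Set E)
    (hself : ∀ a ∈ G, a ∈ M a) :
    ∀ a ∈ G, ∀ a' ∈ G, ∀ m : ℕ, 2 ≤ m → knowSet G M m a = knowSet G M m a' := by
  have key : ∀ a ∈ G, ∀ a' ∈ G, ¬ G ⊆ M a → ∀ k : ℕ, knowSet G M (k + 2) a' = ∅ := by
    intro a ha a' ha' hna k
    obtain ⟨b, hb, hnb⟩ := Set.not_subset.mp hna
    by_cases h' : G ⊆ M a'
    · rw [knowSet_full G M h' (k + 1)]
      apply Set.eq_empty_of_subset_empty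
      calc ⋂ b ∈ G, knowSet G M (k + 1) b ⊆ knowSet G M (k + 1) a := by
              exact Set.biInter_subset_of_mem ha
        _ = ∅ := knowSet_empty G M hb hnb k
    · obtain ⟨c, hc, hnc⟩ := Set.not_subset.mp h'
      exact knowSet_empty G M hc hnc (k + 1)
  intro a ha a' ha' m hm
  obtain ⟨k, rfl⟩ : ∃ k, m = k + 2 := ⟨m - 2, by omega⟩
  by_cases hA : G ⊆ M a
  · by_cases hA' : G ⊆ M a'
    · rw [knowSet_full G M hA, knowSet_full G M hA']
    · rw [key a' ha' a ha hA' k, key a' ha' a' ha' hA' k]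
  · rw [key a ha a ha hA k, key a ha a' ha' hA k]
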